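/- Let p : Fin 13 → ℝ be nonnegative with labels E1,E2,F2,E3,F3,E4,E5,E6,E7,F,F4,F5,E8 such that each of the seven triples (E1,E2,F2), (E1,E3,F3), (E2,E4,E6), (E3,E5,E7), (E6,E7,F), (E4,E8,F4), (E5,E8,F5) sums to 1. Then p(E1) + p(E8) ≤ 3/2. -/
import Mathlib


/-- Labels: 0=E1, 1=E2, 2=F2, 3=E3, 4=F3, 5=E4, 6=E5, 7=E6, 8=E7, 9=F, 10=F4, 11=F5, 12=E8. -/
theorem uncertainty_relation
    (p : Fin 13 → ℝ)
    (hnn : ∀ i, 0 ≤ p i)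
    (h1 : p 0 + p 1 + p 2 = 1)   -- (E1,E2,F2)
    (h2 : p 0 + p 3 + p 4 = 1)   -- (E1,E3,F3)
    (h3 : p 1 + p 5 + p 7 = 1)   -- (E2,E4,E6)
    (h4 : p 3 + p 6 + p 8 = 1)   -- (E3,E5,E7)
    (h5 : p 7 + p 8 + p 9 = 1)   -- (E6,E7,F)
    (h6 : p 5 + p 12 + p 10 = 1) -- (E4,E8,F4)
    (h7 : p 6 + p 12 + p 11 = 1) -- (E5,E8,F5)
    : p 0 + p 12 ≤ 3 / 2 := by
  have := hnn 2; have := hnn 4; have := hnn 9; have := hnn 10; have := hnn 11; have := hnn 1; have := hnn 3; have := hnn 5; have := hnn 6; have := hnn 7; have := hnn 8; linarith
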